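/- (Generalized coefficient-estimation identity, used in Appendix E.) Let ℰ be any linear map on 2^n × 2^n complex matrices. Then for all Pauli strings P_a and P_b, the uniform average over the 6^n n-fold product Pauli eigenstates ρ satisfies 6^{-n} ∑_ρ tr(P_b * ℰ(ρ)) · tr(P_a * ρ) = (1/3)^{|a|} · 2^{-n} · tr(P_b * ℰ(P_a)), where |a| is the number of indices j with a j ≠ 0. -/

import Mathlib

open Matrix Finset

noncomputable section

/-- The four single-qubit Pauli matrices: σ₀ = I, σ₁ = X, σ₂ = Y, σ₃ = Z. -/
def pauli : Fin 4 → Matrix (Fin 2) (Fin 2) ℂ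
  | 0 => 1
  | 1 => !![0, 1; 1, 0]
  | 2 => !![0, -Complex.I; Complex.I, 0]
  | 3 => !![1, 0; 0, -1]

/-- The `n`-qubit Pauli string `P_a = σ_{a 1} ⊗ ⋯ ⊗ σ_{a n}` (n-fold Kronecker product),
a `2^n × 2^n` complex matrix indexed by `Fin n → Fin 2`. -/
def PauliString {n : ℕ} (a : Fin n → Fin 4) :
    Matrix (Fin n → Fin 2) (Fin n → Fin 2) ℂ :=
  fun i k => ∏ j, pauli (a j) (i j) (k j)

/-- `⟨a,b⟩ ∈ {0,1}`: parity of the number of positions where `a` and `b` anticommute. -/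
def ppair {n : ℕ} (a b : Fin n → Fin 4) : ℕ :=
  (Finset.univ.filter fun j => a j ≠ 0 ∧ b j ≠ 0 ∧ a j ≠ b j).card % 2

/-- The weight `|a|` of a Pauli string: the number of non-identity tensor factors. -/
def pweight {n : ℕ} (a : Fin n → Fin 4) : ℕ :=
  (Finset.univ.filter fun j => a j ≠ 0).card

/-- The six single-qubit Pauli eigenstates `(I₂ + s•W)/2`, `s ∈ {1,-1}`, `W ∈ {X,Y,Z}`,
indexed by `Bool × Fin 3`. -/
def eigState : Bool × Fin 3 → Matrix (Fin 2) (Fin 2) ℂ :=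
  fun q => (2⁻¹ : ℂ) • (1 + (if q.1 then (1 : ℂ) else -1) • pauli q.2.succ)

/-- The `6^n` n-fold product Pauli eigenstates `ρ₁ ⊗ ⋯ ⊗ ρ_n` with each `ρ_j ∈ S₁`. -/
def prodEigState {n : ℕ} (f : Fin n → Bool × Fin 3) :
    Matrix (Fin n → Fin 2) (Fin n → Fin 2) ℂ :=
  fun i k => ∏ j, eigState (f j) (i j) (k j)

set_option maxHeartbeats 1000000
section Aux

lemma eig_t0 : eigState (true, 0) = !![2⁻¹, 2⁻¹; 2⁻¹, 2⁻¹] := by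
  ext x y; fin_cases x <;> fin_cases y <;> simp [eigState, pauli, Matrix.one_apply, show (Fin.succ 2 : Fin 4) = 3 from rfl]
lemma eig_f0 : eigState (false, 0) = !![2⁻¹, -2⁻¹; -2⁻¹, 2⁻¹] := by
  ext x y; fin_cases x <;> fin_cases y <;> simp [eigState, pauli, Matrix.one_apply, show (Fin.succ 2 : Fin 4) = 3 from rfl] <;> norm_num
lemma eig_t1 : eigState (true, 1) = !![2⁻¹, -Complex.I * 2⁻¹; Complex.I * 2⁻¹, 2⁻¹] := by
  ext x y; fin_cases x <;> fin_cases y <;> simp [eigState, pauli, Matrix.one_apply, show (Fin.succ 2 : Fin 4) = 3 from rfl] <;> ring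
lemma eig_f1 : eigState (false, 1) = !![2⁻¹, Complex.I * 2⁻¹; -Complex.I * 2⁻¹, 2⁻¹] := by
  ext x y; fin_cases x <;> fin_cases y <;> simp [eigState, pauli, Matrix.one_apply, show (Fin.succ 2 : Fin 4) = 3 from rfl] <;> ring
lemma eig_t2 : eigState (true, 2) = !![1, 0; 0, 0] := by
  ext x y; fin_cases x <;> fin_cases y <;> simp [eigState, pauli, Matrix.one_apply, show (Fin.succ 2 : Fin 4) = 3 from rfl] <;> norm_num
lemma eig_f2 : eigState (false, 2) = !![0, 0; 0, 1] := by
  ext x y; fin_cases x <;> fin_cases y <;> simp [eigState, pauli, Matrix.one_apply, show (Fin.succ 2 : Fin 4) = 3 from rfl] <;> norm_num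

lemma single_key (c : Fin 4) (x y : Fin 2) :
    ∑ q : Bool × Fin 3, (pauli c * eigState q).trace * eigState q x y
      = (if c = 0 then 3 else 1 : ℂ) * pauli c x y := by
  rw [show (univ : Finset (Bool × Fin 3)) = {(true,0),(false,0),(true,1),(false,1),(true,2),(false,2)} by decide]
  fin_cases c <;> fin_cases x <;> fin_cases y <;>
    simp [eig_t0, eig_f0, eig_t1, eig_f1, eig_t2, eig_f2, pauli, Matrix.trace,
      Matrix.mul_apply, Fin.sum_univ_two, Matrix.one_apply] <;> ring_nf <;>
    simp [Complex.ext_iff, show Complex.I^3 = -Complex.I by simp [pow_succ]]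

lemma prod_sum_pi {n : ℕ} {Q : Type*} [Fintype Q] (h : Fin n → Q → ℂ) :
    ∏ j, ∑ q, h j q = ∑ f : Fin n → Q, ∏ j, h j (f j) := by
  rw [Finset.prod_univ_sum, Fintype.piFinset_univ]

lemma trace_mul_kron {n : ℕ} (A B : Fin n → Matrix (Fin 2) (Fin 2) ℂ) :
    (Matrix.of (fun i k : Fin n → Fin 2 => ∏ j, A j (i j) (k j)) *
      Matrix.of (fun i k : Fin n → Fin 2 => ∏ j, B j (i j) (k j))).trace
      = ∏ j, (A j * B j).trace := by
  simp only [Matrix.trace, Matrix.diag, Matrix.mul_apply, Matrix.of_apply]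
  calc ∑ i : Fin n → Fin 2, ∑ k : Fin n → Fin 2,
        (∏ j, A j (i j) (k j)) * ∏ j, B j (k j) (i j)
      = ∑ i : Fin n → Fin 2, ∑ k : Fin n → Fin 2,
        ∏ j, (A j (i j) (k j) * B j (k j) (i j)) := by
        simp [Finset.prod_mul_distrib]
    _ = ∑ i : Fin n → Fin 2, ∏ j, ∑ y, (A j (i j) y * B j y (i j)) := by
        refine Finset.sum_congr rfl fun i _ => ?_
        exact (prod_sum_pi (fun j y => A j (i j) y * B j y (i j))).symm
    _ = ∏ j, ∑ x, ∑ y, A j x y * B j y x :=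
        (prod_sum_pi (fun j x => ∑ y, A j x y * B j y x)).symm
    _ = ∏ j, (A j * B j).trace := by
        simp [Matrix.trace, Matrix.mul_apply, Matrix.diag]

lemma key {n : ℕ} (a : Fin n → Fin 4) :
    ∑ f : Fin n → Bool × Fin 3,
        (PauliString a * prodEigState f).trace • prodEigState f
      = ((3 : ℂ) ^ (n - pweight a)) • PauliString a := by
  ext i k
  simp only [Matrix.sum_apply, Matrix.smul_apply, smul_eq_mul]
  have htr : ∀ f : Fin n → Bool × Fin 3, (PauliString a * prodEigState f).trace
      = ∏ j, (pauli (a j) * eigState (f j)).trace :=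
    fun f => trace_mul_kron (fun j => pauli (a j)) (fun j => eigState (f j))
  calc ∑ f : Fin n → Bool × Fin 3,
        (PauliString a * prodEigState f).trace * prodEigState f i k
      = ∑ f : Fin n → Bool × Fin 3,
        ∏ j, ((pauli (a j) * eigState (f j)).trace * eigState (f j) (i j) (k j)) := by
        refine Finset.sum_congr rfl fun f _ => ?_
        rw [htr f, prodEigState, Finset.prod_mul_distrib]
    _ = ∏ j, ∑ q : Bool × Fin 3,
        ((pauli (a j) * eigState q).trace * eigState q (i j) (k j)) :=
        (prod_sum_pi (fun j q => (pauli (a j) * eigState q).trace * eigState q (i j) (k j))).symm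
    _ = ∏ j, ((if a j = 0 then 3 else 1 : ℂ) * pauli (a j) (i j) (k j)) := by
        exact Finset.prod_congr rfl fun j _ => single_key (a j) (i j) (k j)
    _ = ((3 : ℂ) ^ (n - pweight a)) * PauliString a i k := by
        rw [Finset.prod_mul_distrib]
        congr 1
        have h1 : ∏ j, (if a j = 0 then (3:ℂ) else 1)
            = ∏ j ∈ Finset.univ.filter (fun j => a j = 0), (3:ℂ) :=
          (Finset.prod_filter _ _).symm
        have h2 : (Finset.univ.filter fun j : Fin n => a j = 0).card = n - pweight a := by
          have h3 := Finset.card_filter_add_card_filter_not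
            (s := (Finset.univ : Finset (Fin n))) (p := fun j => a j ≠ 0)
          simp only [not_not, Finset.card_univ, Fintype.card_fin] at h3
          unfold pweight
          omega
        rw [h1, Finset.prod_const, h2]

end Aux

/-- Generalized coefficient-estimation identity (Lemma 16 of Huang–Chen–Preskill, used in
Appendix E): the classical-shadow average recovers the Pauli-basis matrix element
`2^{-n} tr(P_b ℰ(P_a))` of any linear map `ℰ`, scaled by `(1/3)^|a|`. -/
theorem coefficient_estimation {n : ℕ}
    (E : Matrix (Fin n → Fin 2) (Fin n → Fin 2) ℂ →ₗ[ℂ]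
          Matrix (Fin n → Fin 2) (Fin n → Fin 2) ℂ)
    (a b : Fin n → Fin 4) :
    ((6 : ℂ) ^ n)⁻¹ * ∑ f : Fin n → Bool × Fin 3,
        (PauliString b * E (prodEigState f)).trace * (PauliString a * prodEigState f).trace
      = (1 / 3 : ℂ) ^ pweight a * ((2 : ℂ) ^ n)⁻¹ *
          (PauliString b * E (PauliString a)).trace := by
  have hle : pweight a ≤ n := by
    simpa [pweight] using Finset.card_filter_le (Finset.univ : Finset (Fin n))
      (fun j => a j ≠ 0)
  have hsum : ∑ f : Fin n → Bool × Fin 3,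
      (PauliString b * E (prodEigState f)).trace * (PauliString a * prodEigState f).trace
      = ((3:ℂ) ^ (n - pweight a)) * (PauliString b * E (PauliString a)).trace := by
    have h := congrArg (fun M => (PauliString b * E M).trace) (key a)
    simp only [map_sum, _root_.map_smul, Matrix.mul_sum, Matrix.mul_smul, Matrix.trace_sum,
      Matrix.trace_smul, smul_eq_mul] at h
    rw [← h]
    exact Finset.sum_congr rfl fun f _ => mul_comm _ _
  rw [hsum]
  have h3 : (3:ℂ) ^ (n - pweight a) = 3 ^ n / 3 ^ pweight a := by
    rw [eq_div_iff (pow_ne_zero _ (by norm_num : (3:ℂ) ≠ 0)), ← pow_add,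
      Nat.sub_add_cancel hle]
  have h6 : (6:ℂ) ^ n = 2 ^ n * 3 ^ n := by rw [← mul_pow]; norm_num
  rw [h3, h6]
  have h2 : (2:ℂ) ^ n ≠ 0 := pow_ne_zero _ (by norm_num)
  have h3n : (3:ℂ) ^ n ≠ 0 := pow_ne_zero _ (by norm_num)
  have h3w : (3:ℂ) ^ pweight a ≠ 0 := pow_ne_zero _ (by norm_num)
  field_simp
  have hw : (1/3:ℂ) ^ pweight a * 3 ^ pweight a = 1 := by rw [← mul_pow]; norm_num
  linear_combination (-(PauliString b * E (PauliString a)).trace) * hw
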